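/- Consider an acyclic CP-net in topological order on variables 1,…,n, and two outcomes o₁, o₂. Let k be the least index at which o₁ and o₂ differ, so o₁ and o₂ agree on coordinates 1,…,k−1 (hence on all ancestors of k). If the conditional preference order on D_k given the common parent values ranks o₂'s value at k strictly above o₁'s value at k, then o₁ ≻ o₂ does not hold in the induced preference order (the ordering-query / prefix-elimination lemma). -/

import Mathlib

theorem stmt_11 {n : ℕ} (D : Fin n → Type) [∀ i, Finite (D i)]
    (Pa : Fin n → Set (Fin n)) (hPa : ∀ i j, j ∈ Pa i → j < i)
    (r : ∀ i : Fin n, (∀ j, D j) → D i → D i → Prop)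
    (hdep : ∀ i o o', (∀ j ∈ Pa i, o j = o' j) → ∀ a b, (r i o a b ↔ r i o' a b))
    (hirr : ∀ i o a, ¬ r i o a a)
    (htrans : ∀ i o a b c, r i o a b → r i o b c → r i o a c)
    (htotal : ∀ i o (a b : D i), a ≠ b → r i o a b ∨ r i o b a)
    (flip : (∀ j, D j) → (∀ j, D j) → Prop)
    (hflip : ∀ a b, flip a b ↔ ∃ i, (∀ j, j ≠ i → a j = b j) ∧ r i b (a i) (b i))
    (pref : (∀ j, D j) → (∀ j, D j) → Prop)
    (hpref : ∀ a b, pref a b ↔ Relation.TransGen flip a b)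
    (o₁ o₂ : ∀ j, D j) (k : Fin n)
    (hagree : ∀ j, j < k → o₁ j = o₂ j)
    (hdiff : o₁ k ≠ o₂ k)
    (hbetter : r k o₁ (o₂ k) (o₁ k)) :
    ¬ pref o₁ o₂ := by
  intro hp
  rw [hpref] at hp
  have C : ∀ a, Relation.TransGen flip a o₂ →
      ∃ m : Fin n, (∀ j, j < m → a j = o₂ j) ∧ r m o₂ (a m) (o₂ m) := by
    intro a ha
    induction ha using Relation.TransGen.head_induction_on with
    | single h =>
        rw [hflip] at h
        obtain ⟨i, hij, hri⟩ := h
        exact ⟨i, fun j hj => hij j (Fin.ne_of_lt hj), hri⟩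
    | head h hc ih =>
        rename_i a' c
        rw [hflip] at h
        obtain ⟨i, hij, hri⟩ := h
        obtain ⟨m, hm1, hm2⟩ := ih
        rcases lt_trichotomy i m with hlt | heq | hgt
        · refine ⟨i, fun j hj => ?_, ?_⟩
          · rw [hij j (Fin.ne_of_lt hj), hm1 j (lt_trans hj hlt)]
          · have hctx : ∀ j ∈ Pa i, c j = o₂ j :=
              fun j hjp => hm1 j (lt_trans (hPa i j hjp) hlt)
            have := (hdep i c o₂ hctx _ _).mp hri
            rwa [hm1 i hlt] at this
        · subst heq
          refine ⟨i, fun j hj => ?_, ?_⟩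
          · rw [hij j (Fin.ne_of_lt hj), hm1 j hj]
          · have hctx : ∀ j ∈ Pa i, c j = o₂ j :=
              fun j hjp => hm1 j (hPa i j hjp)
            have h1 := (hdep i c o₂ hctx _ _).mp hri
            exact htrans i o₂ _ _ _ h1 hm2
        · refine ⟨m, fun j hj => ?_, ?_⟩
          · rw [hij j (Fin.ne_of_lt (lt_trans hj hgt)), hm1 j hj]
          · rwa [hij m (Fin.ne_of_lt hgt)]
  obtain ⟨m, hm1, hm2⟩ := C o₁ hp
  rcases lt_trichotomy m k with hlt | heq | hgt
  · rw [hagree m hlt] at hm2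
    exact hirr m o₂ _ hm2
  · subst heq
    have hctx : ∀ j ∈ Pa m, o₁ j = o₂ j := fun j hjp => hagree j (hPa m j hjp)
    have h1 := (hdep m o₁ o₂ hctx _ _).mp hbetter
    exact hirr m o₂ _ (htrans m o₂ _ _ _ hm2 h1)
  · exact hdiff (hm1 k hgt)
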